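/- Let A be a Hopf algebra over k with bijective antipode S, let Ω¹(A) be a left covariant first order differential calculus on A with left-invariant basis ω₁, …, ω_n (data θ_ij, χ_i as in the covariant calculus setup), and let ∇(f) = Σ_i (χ_i ∘ S⁻²) ⊳ f(ω_i) be the associated hom-connection. Assume Ω¹(A) extends to a differential graded algebra such that ∇ is flat, and let λ : A → k be a right integral on the Hopf algebra A, i.e. λ(a₍₁₎) a₍₂₎ = λ(a)·1 for all a ∈ A. Then λ ∘ ∇ = 0, and consequently there exists a unique k-linear map φ : coker(∇) → k such that λ = φ ∘ Λ, where Λ : A → coker(∇) is the ∇-integral. -/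
import Mathlib


/-!
# Statement 15 (Theorem 4.1(2))

Let `A` be a Hopf algebra with bijective antipode, `Ω¹(A)` a left covariant first
order differential calculus on `A` (data `θ_ij`, `χ_i`, left-invariant basis
`ω_i`), and `∇(f) = Σ_i (χ_i ∘ S⁻²) ⊳ f(ω_i)` the associated hom-connection.
If `λ : A → k` is a right integral on `A` (`λ(a₍₁₎) a₍₂₎ = λ(a) 1`), then
`λ ∘ ∇ = 0`; consequently there is a unique `k`-linear map
`φ : coker ∇ → k` with `λ = φ ∘ Λ`, `Λ : A → coker ∇` the `∇`-integral.
-/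

open TensorProduct

namespace Stmt15

variable {k A : Type*} [Field k] [Ring A] [HopfAlgebra k A] {n : ℕ}

/-- The left action `f ⊳ a = (id ⊗ f)(Δ a)` of a functional `f : A → k` on `A`. -/
noncomputable def hit (f : A →ₗ[k] k) : A →ₗ[k] A :=
  (TensorProduct.rid k A).toLinearMap ∘ₗ (LinearMap.lTensor A f) ∘ₗ Coalgebra.comul

variable (θ : Fin n → Fin n → (A →ₗ[k] k))

/-- The right `A`-action on `Ω¹(A)` in left coordinates. -/
noncomputable def ract (x : Fin n → A) (a : A) : Fin n → A :=
  fun i => ∑ j, x j * hit (θ j i) a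

/-- `Hom_A(Ω¹(A), A)`: the right `A`-linear maps `Ω¹(A) → A`. -/
noncomputable def homD : Submodule k ((Fin n → A) →ₗ[k] A) where
  carrier := {f | ∀ (x : Fin n → A) (a : A), f (ract θ x a) = f x * a}
  add_mem' {f g} hf hg := by
    intro x a
    simp only [LinearMap.add_apply, hf x a, hg x a, add_mul]
  zero_mem' := by intro x a; simp
  smul_mem' c f hf := by
    intro x a
    simp only [LinearMap.smul_apply, hf x a, smul_mul_assoc]

/-- The left-invariant basis `ω_i` of `Ω¹(A)`. -/
def om (i : Fin n) : Fin n → A := Pi.single i 1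

/--
Let `λ` be a right integral on the Hopf algebra `A`, i.e.
`(λ ⊗ id)(Δ a) = λ(a) 1`, and let `∇` be the hom-connection of Theorem 4.1(1),
`∇(f) = Σ_i ((χ_i ∘ S⁻²) ⊳ f(ω_i))`.  Then `λ ∘ ∇ = 0`, and there exists a
unique `k`-linear map `φ : A / im ∇ → k` such that `λ = φ ∘ Λ`, where
`Λ : A → A / im ∇ = coker ∇` is the canonical projection (the `∇`-integral).
-/
theorem integral_factors_through_coker
    (S' : A →ₗ[k] A)
    (hS'l : ∀ a, S' (HopfAlgebra.antipode (R := k) a) = a)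
    (hS'r : ∀ a, HopfAlgebra.antipode (R := k) (S' a) = a)
    (χ : Fin n → (A →ₗ[k] k))
    (hθmul : ∀ (i j : Fin n) (a b : A),
      θ i j (a * b) = ∑ l, θ i l a * θ l j b)
    (hθone : ∀ i j : Fin n, θ i j 1 = if i = j then (1 : k) else 0)
    (hχ : ∀ (i : Fin n) (a b : A),
      χ i (a * b) = (∑ j, χ j a * θ j i b) + Coalgebra.counit a * χ i b)
    (lam : A →ₗ[k] k)
    (hlam : ∀ a : A,
      (TensorProduct.lid k A) ((LinearMap.rTensor A lam) (Coalgebra.comul a))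
        = lam a • (1 : A))
    (nabla : homD θ →ₗ[k] A)
    (hnabla : ∀ f : homD θ,
      nabla f = ∑ i, hit ((χ i) ∘ₗ S' ∘ₗ S') (f.1 (om i))) :
    (∀ f : homD θ, lam (nabla f) = 0) ∧
    (∃! φ : (A ⧸ LinearMap.range nabla) →ₗ[k] k,
      ∀ a : A, φ (Submodule.mkQ (LinearMap.range nabla) a) = lam a) := by
  -- λ(g ⊳ a) = λ(a) * g(1)
  have lam_hit : ∀ (g : A →ₗ[k] k) (a : A), lam (hit g a) = lam a * g 1 := by
    intro g a
    have key : (lam ∘ₗ (TensorProduct.rid k A).toLinearMap ∘ₗ LinearMap.lTensor A g)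
        = (g ∘ₗ (TensorProduct.lid k A).toLinearMap ∘ₗ LinearMap.rTensor A lam) := by
      ext x y
      simp [mul_comm]
    have h2 := LinearMap.congr_fun key (Coalgebra.comul a)
    simp only [LinearMap.comp_apply] at h2
    rw [hit]
    simp only [LinearMap.comp_apply]
    simp only [LinearEquiv.coe_coe] at h2 ⊢
    rw [h2, hlam]
    simp [mul_comm]
  -- antipode 1 = 1
  have hanti1 : HopfAlgebra.antipode (R := k) (1 : A) = 1 := by
    have := HopfAlgebra.mul_antipode_rTensor_comul_apply (R := k) (A := A) (1 : A)
    simpa [Algebra.TensorProduct.one_def] using this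
  have hS'1 : S' (1 : A) = 1 := by
    have := hS'l 1
    rwa [hanti1] at this
  -- χ i 1 = 0
  have hχ1 : ∀ i : Fin n, χ i 1 = 0 := by
    intro i
    have := hχ i 1 1
    simp only [mul_one, one_mul, hθone, Bialgebra.counit_one] at this
    have hsum : (∑ j, χ j 1 * if j = i then (1 : k) else 0) = χ i 1 := by
      simp [Finset.sum_ite_eq]
    rw [hsum] at this
    exact left_eq_add.mp this
  have hzero : ∀ f : homD θ, lam (nabla f) = 0 := by
    intro f
    rw [hnabla f, map_sum]
    refine Finset.sum_eq_zero fun i _ => ?_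
    rw [lam_hit]
    simp [hS'1, hχ1 i]
  refine ⟨hzero, ?_⟩
  have hle : LinearMap.range nabla ≤ LinearMap.ker lam := by
    rintro x ⟨f, rfl⟩
    exact hzero f
  refine ⟨Submodule.liftQ _ lam hle, fun a => rfl, ?_⟩
  intro φ hφ
  ext x
  exact hφ x

end Stmt15
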